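/- arXiv:0907.3990 — 3 statements merged into one kernel-verified Lean document; each statement's English description precedes it below -/
import Mathlib

section
/- For any t ∈ ℂ, λ(ξ) ∈ ℂ[ξ] and p(z) ∈ ℂ[z]: Φ_t fixes λ(ξ) and p(z), and Φ_t(λ(ξ)·p(z)) = λ(ξ) ∗_{-t} p(z). -/
open MvPolynomial

noncomputable section

/-- ℂ[ξ,z] in 2n variables: `Sum.inl i` is ξᵢ, `Sum.inr i` is zᵢ. -/
abbrev P (n : ℕ) := MvPolynomial (Fin n ⊕ Fin n) ℂ

variable {n : ℕ}

/-- ∂ᵢ = ∂/∂zᵢ -/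
def dz (i : Fin n) : Module.End ℂ (P n) := (pderiv (Sum.inr i)).toLinearMap
/-- δᵢ = ∂/∂ξᵢ -/
def dxi (i : Fin n) : Module.End ℂ (P n) := (pderiv (Sum.inl i)).toLinearMap
/-- ∂^α (the factors pairwise commute, so the ordered product is the mathematical one) -/
def Dz (α : Fin n → ℕ) : Module.End ℂ (P n) := (List.ofFn (fun i => dz i ^ α i)).prod
/-- δ^α -/
def Dxi (α : Fin n → ℕ) : Module.End ℂ (P n) := (List.ofFn (fun i => dxi i ^ α i)).prod
/-- |α| -/
def mdeg (α : Fin n → ℕ) : ℕ := ∑ i, α i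
/-- α! -/
def mfact (α : Fin n → ℕ) : ℕ := ∏ i, (α i).factorial

/-- The deformed product `f ∗_t g = Σ_{α,β} ((-t)^{|α|+|β|}/(α!β!)) (δ^β ∂^α f)(∂^β δ^α g)`. -/
def astar (t : ℂ) (f g : P n) : P n :=
  ∑ᶠ (α : Fin n → ℕ), ∑ᶠ (β : Fin n → ℕ),
    ((-t) ^ (mdeg α + mdeg β) / ((mfact α : ℂ) * (mfact β : ℂ))) •
      (Dxi β (Dz α f) * Dz β (Dxi α g))

/-- Λ = Σᵢ δᵢ∂ᵢ -/
def Lam : Module.End ℂ (P n) := ∑ i, dxi i * dz i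
/-- Φ_t = e^{tΛ} -/
def Phi (t : ℂ) (f : P n) : P n := ∑ᶠ m : ℕ, (t ^ m / (m.factorial : ℂ)) • ((Lam ^ m) f)

def xiv (i : Fin n) : P n := X (Sum.inl i)
def zv (i : Fin n) : P n := X (Sum.inr i)
def XiPow (α : Fin n → ℕ) : P n := ∏ i, xiv i ^ α i
def ZPowMon (α : Fin n → ℕ) : P n := ∏ i, zv i ^ α i
def mulXi (i : Fin n) : Module.End ℂ (P n) := LinearMap.mulLeft ℂ (xiv i)
def mulZ (i : Fin n) : Module.End ℂ (P n) := LinearMap.mulLeft ℂ (zv i)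

/-- λ(ξ): the image of λ ∈ ℂ[ξ] in ℂ[ξ,z] -/
def ofXi (l : MvPolynomial (Fin n) ℂ) : P n := rename Sum.inl l
/-- p(z): the image of p ∈ ℂ[z] in ℂ[ξ,z] -/
def ofZ (p : MvPolynomial (Fin n) ℂ) : P n := rename Sum.inr p

/-! ### Auxiliary lemmas -/

lemma pderiv_pderiv_comm {σ : Type*} (u v : σ) (f : MvPolynomial σ ℂ) :
    pderiv u (pderiv v f) = pderiv v (pderiv u f) := by
  classical
  apply MvPolynomial.induction_on
    (motive := fun f => pderiv u (pderiv v f) = pderiv v (pderiv u f)) f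
  · intro a; simp
  · intro p q hp hq; simp [hp, hq]
  · intro p w h
    simp only [pderiv_mul, map_add, h, pderiv_X, Pi.single_apply, apply_ite (pderiv u),
      apply_ite (pderiv v), pderiv_one, map_zero, ite_self, mul_zero, add_zero]
    split_ifs <;> simp_all

lemma commute_d (u v : Fin n ⊕ Fin n) :
    Commute ((pderiv u).toLinearMap : Module.End ℂ (P n)) (pderiv v).toLinearMap := by
  apply LinearMap.ext; intro f
  simp only [Module.End.mul_apply]
  exact pderiv_pderiv_comm u v f

lemma commute_dxi (i j : Fin n) : Commute (dxi i) (dxi j) := commute_d _ _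
lemma commute_dz (i j : Fin n) : Commute (dz i) (dz j) := commute_d _ _

lemma commute_prodpow {M : Type*} [Monoid M] {m : ℕ} {u : Fin m → M}
    (h : ∀ a b, Commute (u a) (u b)) (i : Fin m) (β : Fin m → ℕ) :
    Commute (u i) (List.ofFn fun j => u j ^ β j).prod := by
  apply Commute.list_prod_right
  intro x hx
  rw [List.mem_ofFn] at hx
  obtain ⟨j, rfl⟩ := hx
  exact (h i j).pow_right _

lemma prodpow_update {M : Type*} [Monoid M] :
    ∀ {m : ℕ} (u : Fin m → M), (∀ a b, Commute (u a) (u b)) → ∀ (β : Fin m → ℕ) (i : Fin m),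
    (List.ofFn fun j => u j ^ (Function.update β i (β i + 1) j)).prod
      = u i * (List.ofFn fun j => u j ^ β j).prod := by
  intro m
  induction m with
  | zero => exact fun u h β i => i.elim0
  | succ m ih =>
    intro u h β i
    rw [List.ofFn_succ, List.ofFn_succ, List.prod_cons, List.prod_cons]
    induction i using Fin.cases with
    | zero =>
      have h1 : ∀ j : Fin m, Function.update β 0 (β 0 + 1) j.succ = β j.succ := fun j =>
        Function.update_of_ne (Fin.succ_ne_zero j) _ _
      simp only [Function.update_self, h1]
      rw [pow_succ', mul_assoc]
    | succ i' =>
      have h0 : Function.update β i'.succ (β i'.succ + 1) 0 = β 0 :=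
        Function.update_of_ne (Fin.succ_ne_zero i').symm _ _
      have h2 : (fun j : Fin m => u j.succ ^ Function.update β i'.succ (β i'.succ + 1) j.succ)
          = fun j : Fin m => (u ∘ Fin.succ) j ^
              Function.update (fun k : Fin m => β k.succ) i' (β i'.succ + 1) j := by
        funext j
        rcases eq_or_ne j i' with rfl | hj
        · simp
        · rw [Function.update_of_ne (fun hc => hj (Fin.succ_injective _ hc)),
            Function.update_of_ne hj]
          rfl
      rw [h0, h2, ih (u ∘ Fin.succ) (fun a b => h _ _) _ i']
      rw [← mul_assoc, ← mul_assoc]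
      congr 1
      exact ((h i'.succ 0).pow_right _).symm

/-- increment a multi-index at `i` -/
def inc (i : Fin n) (β : Fin n → ℕ) : Fin n → ℕ := Function.update β i (β i + 1)

lemma Dxi_inc (i : Fin n) (β : Fin n → ℕ) : Dxi (inc i β) = dxi i * Dxi β :=
  prodpow_update _ commute_dxi β i

lemma Dz_inc (i : Fin n) (β : Fin n → ℕ) : Dz (inc i β) = dz i * Dz β :=
  prodpow_update _ commute_dz β i

lemma Dxi_inc' (i : Fin n) (β : Fin n → ℕ) : Dxi (inc i β) = Dxi β * dxi i := by
  rw [Dxi_inc]; exact (commute_prodpow commute_dxi i β).eq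

lemma Dz_inc' (i : Fin n) (β : Fin n → ℕ) : Dz (inc i β) = Dz β * dz i := by
  rw [Dz_inc]; exact (commute_prodpow commute_dz i β).eq

lemma Dxi_zero : Dxi (0 : Fin n → ℕ) = 1 := by
  apply List.prod_eq_one
  intro x hx
  rw [List.mem_ofFn] at hx
  obtain ⟨j, rfl⟩ := hx
  simp

lemma Dz_zero : Dz (0 : Fin n → ℕ) = 1 := by
  apply List.prod_eq_one
  intro x hx
  rw [List.mem_ofFn] at hx
  obtain ⟨j, rfl⟩ := hx
  simp

lemma dxi_ofXi (i : Fin n) (l : MvPolynomial (Fin n) ℂ) :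
    dxi i (ofXi l) = ofXi (pderiv i l) :=
  pderiv_rename Sum.inl_injective i l

lemma dz_ofZ (i : Fin n) (p : MvPolynomial (Fin n) ℂ) :
    dz i (ofZ p) = ofZ (pderiv i p) :=
  pderiv_rename Sum.inr_injective i p

lemma dz_ofXi (i : Fin n) (l : MvPolynomial (Fin n) ℂ) : dz i (ofXi l) = 0 := by
  classical
  apply pderiv_eq_zero_of_notMem_vars
  intro h
  obtain ⟨j, -, hj⟩ := mem_vars_rename _ _ h
  exact Sum.inl_ne_inr hj

lemma dxi_ofZ (i : Fin n) (p : MvPolynomial (Fin n) ℂ) : dxi i (ofZ p) = 0 := by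
  classical
  apply pderiv_eq_zero_of_notMem_vars
  intro h
  obtain ⟨j, -, hj⟩ := mem_vars_rename _ _ h
  exact Sum.inr_ne_inl hj

lemma list_pres (of : MvPolynomial (Fin n) ℂ → P n) :
    ∀ (L : List (Module.End ℂ (P n))),
      (∀ A ∈ L, ∀ q, ∃ q', A (of q) = of q') → ∀ q, ∃ q', L.prod (of q) = of q'
  | [], _, q => ⟨q, by simp⟩
  | A :: L, h, q => by
    obtain ⟨q1, hq1⟩ := list_pres of L (fun B hB => h B (List.mem_cons_of_mem _ hB)) q
    rw [List.prod_cons, Module.End.mul_apply, hq1]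
    exact h A (List.mem_cons_self) q1

lemma pow_pres {A : Module.End ℂ (P n)} {of : MvPolynomial (Fin n) ℂ → P n}
    (h : ∀ q, ∃ q', A (of q) = of q') (k : ℕ) : ∀ q, ∃ q', (A ^ k) (of q) = of q' := by
  induction k with
  | zero => exact fun q => ⟨q, by simp⟩
  | succ k ih =>
    intro q
    obtain ⟨q1, hq1⟩ := ih q
    rw [pow_succ', Module.End.mul_apply, hq1]
    exact h q1

lemma Dxi_ofXi (β : Fin n → ℕ) (l : MvPolynomial (Fin n) ℂ) :
    ∃ l', Dxi β (ofXi l) = ofXi l' := by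
  apply list_pres
  intro A hA
  rw [List.mem_ofFn] at hA
  obtain ⟨j, rfl⟩ := hA
  exact pow_pres (fun q => ⟨pderiv j q, dxi_ofXi j q⟩) _

lemma Dz_ofZ' (β : Fin n → ℕ) (p : MvPolynomial (Fin n) ℂ) :
    ∃ p', Dz β (ofZ p) = ofZ p' := by
  apply list_pres
  intro A hA
  rw [List.mem_ofFn] at hA
  obtain ⟨j, rfl⟩ := hA
  exact pow_pres (fun q => ⟨pderiv j q, dz_ofZ j q⟩) _

lemma exists_ne_zero_of_ne_zero {α : Fin n → ℕ} (hα : α ≠ 0) : ∃ i, α i ≠ 0 := by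
  by_contra h
  push_neg at h
  exact hα (funext fun i => h i)

lemma eq_inc_update {α : Fin n → ℕ} {i : Fin n} (hi : α i ≠ 0) :
    α = inc i (Function.update α i (α i - 1)) := by
  funext j
  rcases eq_or_ne j i with rfl | hj
  · simp only [inc, Function.update_self, Function.update_idem]
    omega
  · simp only [inc]
    rw [Function.update_of_ne hj, Function.update_of_ne hj]

lemma Dz_ofXi_eq_zero {α : Fin n → ℕ} (hα : α ≠ 0) (l : MvPolynomial (Fin n) ℂ) :
    Dz α (ofXi l) = 0 := by
  obtain ⟨i, hi⟩ := exists_ne_zero_of_ne_zero hα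
  rw [eq_inc_update hi, Dz_inc', Module.End.mul_apply, dz_ofXi, map_zero]

lemma Dxi_ofZ_eq_zero {α : Fin n → ℕ} (hα : α ≠ 0) (p : MvPolynomial (Fin n) ℂ) :
    Dxi α (ofZ p) = 0 := by
  obtain ⟨i, hi⟩ := exists_ne_zero_of_ne_zero hα
  rw [eq_inc_update hi, Dxi_inc', Module.End.mul_apply, dxi_ofZ, map_zero]

lemma mdeg_update (β : Fin n → ℕ) (i : Fin n) (v : ℕ) :
    mdeg (Function.update β i v) + β i = mdeg β + v := by
  unfold mdeg
  rw [Finset.sum_update_of_mem (Finset.mem_univ i),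
    Finset.sum_eq_sum_sdiff_singleton_add (Finset.mem_univ i) β]
  omega

lemma mdeg_inc (i : Fin n) (β : Fin n → ℕ) : mdeg (inc i β) = mdeg β + 1 := by
  have := mdeg_update β i (β i + 1)
  unfold inc
  omega

lemma mfact_inc (i : Fin n) (β : Fin n → ℕ) : mfact (inc i β) = (β i + 1) * mfact β := by
  unfold mfact inc
  rw [Finset.prod_congr rfl (fun j _ =>
      Function.apply_update (fun _ k => Nat.factorial k) β i (β i + 1) j),
    Finset.prod_update_of_mem (Finset.mem_univ i),
    Finset.prod_eq_prod_diff_singleton_mul (Finset.mem_univ i) (fun j => (β j).factorial),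
    Nat.factorial_succ]
  ring

lemma mfact_ne_zero (β : Fin n → ℕ) : (mfact β : ℂ) ≠ 0 := by
  have : mfact β ≠ 0 := Finset.prod_ne_zero_iff.mpr fun i _ => (β i).factorial_ne_zero
  exact_mod_cast Nat.cast_ne_zero.mpr this

lemma sum_sub_single (d : Fin n →₀ ℕ) (i : Fin n) (h0 : d i ≠ 0) :
    ((d - Finsupp.single i 1).sum fun _ e => e) + 1 = d.sum fun _ e => e := by
  classical
  rw [Finsupp.sum_fintype _ _ (fun _ => rfl), Finsupp.sum_fintype _ _ (fun _ => rfl)]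
  have hpt : ∀ j, ((d - Finsupp.single i 1 : Fin n →₀ ℕ)) j = d j - (if i = j then 1 else 0) :=
    fun j => by rw [Finsupp.tsub_apply, Finsupp.single_apply]
  simp only [hpt]
  rw [Finset.sum_eq_sum_sdiff_singleton_add (Finset.mem_univ i)
      (fun j => d j - if i = j then 1 else 0),
    Finset.sum_eq_sum_sdiff_singleton_add (Finset.mem_univ i) (fun j => d j)]
  have h2 : ∀ j ∈ Finset.univ \ {i}, d j - (if i = j then 1 else 0) = d j := by
    intro j hj
    rw [Finset.mem_sdiff, Finset.mem_singleton] at hj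
    rw [if_neg (fun hc => hj.2 hc.symm)]
    omega
  rw [Finset.sum_congr rfl h2, if_pos rfl]
  have hee : (Finset.univ \ {i} : Finset (Fin n)).sum ⇑d = ∑ x ∈ Finset.univ \ {i}, d x := rfl
  rw [hee]
  omega

lemma td_pderiv_le (i : Fin n) (l : MvPolynomial (Fin n) ℂ) :
    (pderiv i l).totalDegree ≤ l.totalDegree - 1 := by
  classical
  conv_lhs => rw [l.as_sum]
  rw [map_sum]
  refine le_trans (totalDegree_finset_sum _ _) (Finset.sup_le ?_)
  intro d hd
  rw [pderiv_monomial]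
  rcases eq_or_ne (d i) 0 with h0 | h0
  · simp [h0]
  · refine le_trans (totalDegree_monomial_le _ _) ?_
    have hle := le_totalDegree hd
    have key := sum_sub_single d i h0
    show ((d - Finsupp.single i 1).sum fun _ e => e) ≤ l.totalDegree - 1
    omega

lemma pderiv_ne_zero_td {i : Fin n} {l : MvPolynomial (Fin n) ℂ} (h : pderiv i l ≠ 0) :
    0 < l.totalDegree := by
  classical
  rcases Nat.eq_zero_or_pos l.totalDegree with h0 | h0
  · exfalso
    apply h
    apply pderiv_eq_zero_of_notMem_vars
    intro hmem
    rw [mem_vars] at hmem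
    obtain ⟨d, hd, hid⟩ := hmem
    rw [Finsupp.mem_support_iff] at hid
    exact hid ((totalDegree_eq_zero_iff (Fin n) l).mp h0 d hd i)
  · exact h0

lemma Dxi_ofXi_degkill : ∀ (m : ℕ) (β : Fin n → ℕ) (l : MvPolynomial (Fin n) ℂ),
    mdeg β = m → l.totalDegree < m → Dxi β (ofXi l) = 0 := by
  intro m
  induction m using Nat.strong_induction_on with
  | _ m ih =>
  intro β l hm hdeg
  have hm0 : 0 < m := lt_of_le_of_lt (Nat.zero_le _) hdeg
  have hne : β ≠ 0 := by
    intro hc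
    rw [hc] at hm
    unfold mdeg at hm
    simp at hm
    omega
  obtain ⟨i, hi⟩ := exists_ne_zero_of_ne_zero hne
  have hmd := mdeg_update β i (β i - 1)
  rw [eq_inc_update hi, Dxi_inc', Module.End.mul_apply, dxi_ofXi]
  rcases eq_or_ne (pderiv i l) 0 with hz | hz
  · rw [hz]
    have : ofXi (0 : MvPolynomial (Fin n) ℂ) = 0 := map_zero _
    rw [this, map_zero]
  · have h1 := td_pderiv_le i l
    have h2 := pderiv_ne_zero_td hz
    exact ih (mdeg (Function.update β i (β i - 1))) (by omega) _ _ rfl (by omega)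

lemma Dz_ofZ_degkill : ∀ (m : ℕ) (β : Fin n → ℕ) (p : MvPolynomial (Fin n) ℂ),
    mdeg β = m → p.totalDegree < m → Dz β (ofZ p) = 0 := by
  intro m
  induction m using Nat.strong_induction_on with
  | _ m ih =>
  intro β p hm hdeg
  have hm0 : 0 < m := lt_of_le_of_lt (Nat.zero_le _) hdeg
  have hne : β ≠ 0 := by
    intro hc
    rw [hc] at hm
    unfold mdeg at hm
    simp at hm
    omega
  obtain ⟨i, hi⟩ := exists_ne_zero_of_ne_zero hne
  have hmd := mdeg_update β i (β i - 1)
  rw [eq_inc_update hi, Dz_inc', Module.End.mul_apply, dz_ofZ]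
  rcases eq_or_ne (pderiv i p) 0 with hz | hz
  · rw [hz]
    have : ofZ (0 : MvPolynomial (Fin n) ℂ) = 0 := map_zero _
    rw [this, map_zero]
  · have h1 := td_pderiv_le i p
    have h2 := pderiv_ne_zero_td hz
    exact ih (mdeg (Function.update β i (β i - 1))) (by omega) _ _ rfl (by omega)

lemma Lam_apply (x : P n) : Lam x = ∑ i, dxi i (dz i x) := by
  unfold Lam
  rw [LinearMap.sum_apply]
  exact Finset.sum_congr rfl fun i _ => rfl

lemma dz_apply (i : Fin n) (f : P n) : dz i f = pderiv (Sum.inr i) f := rfl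
lemma dxi_apply (i : Fin n) (f : P n) : dxi i f = pderiv (Sum.inl i) f := rfl

lemma Lam_ofXi (l : MvPolynomial (Fin n) ℂ) : Lam (ofXi l) = 0 := by
  rw [Lam_apply]
  apply Finset.sum_eq_zero
  intro i _
  rw [dz_ofXi, map_zero]

lemma Lam_ofZ (p : MvPolynomial (Fin n) ℂ) : Lam (ofZ p) = 0 := by
  rw [Lam_apply]
  apply Finset.sum_eq_zero
  intro i _
  rw [dz_ofZ, dxi_ofZ]

lemma Lam_T (l p : MvPolynomial (Fin n) ℂ) (β : Fin n → ℕ) :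
    Lam (Dxi β (ofXi l) * Dz β (ofZ p))
      = ∑ i, Dxi (inc i β) (ofXi l) * Dz (inc i β) (ofZ p) := by
  obtain ⟨a, ha⟩ := Dxi_ofXi β l
  obtain ⟨b, hb⟩ := Dz_ofZ' β p
  rw [Lam_apply]
  apply Finset.sum_congr rfl
  intro i _
  rw [Dxi_inc, Dz_inc, Module.End.mul_apply, Module.End.mul_apply, ha, hb]
  have h1 : dz i (ofXi a * ofZ b) = ofXi a * ofZ (pderiv i b) := by
    rw [dz_apply, pderiv_mul, ← dz_apply i (ofXi a), ← dz_apply i (ofZ b), dz_ofXi, dz_ofZ,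
      zero_mul, zero_add]
  have h2 : dxi i (ofXi a * ofZ (pderiv i b)) = ofXi (pderiv i a) * ofZ (pderiv i b) := by
    rw [dxi_apply, pderiv_mul, ← dxi_apply i (ofXi a), ← dxi_apply i (ofZ (pderiv i b)),
      dxi_ofXi, dxi_ofZ, mul_zero, add_zero]
  rw [h1, h2, dxi_ofXi, dz_ofZ]

/-- multi-indices of total degree `m` -/
def degSet (n m : ℕ) : Finset (Fin n → ℕ) :=
  (Fintype.piFinset fun _ : Fin n => Finset.range (m + 1)).filter fun β => mdeg β = m

lemma mem_degSet {m : ℕ} {β : Fin n → ℕ} : β ∈ degSet n m ↔ mdeg β = m := by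
  unfold degSet
  rw [Finset.mem_filter, Fintype.mem_piFinset]
  constructor
  · rintro ⟨-, h⟩; exact h
  · intro h
    refine ⟨fun i => ?_, h⟩
    rw [Finset.mem_range]
    have := Finset.single_le_sum (f := β) (fun j _ => Nat.zero_le _) (Finset.mem_univ i)
    unfold mdeg at h
    omega

lemma degSet_zero : degSet n 0 = {0} := by
  ext β
  rw [mem_degSet, Finset.mem_singleton]
  constructor
  · intro h
    funext i
    show β i = 0
    have := Finset.single_le_sum (f := β) (fun j _ => Nat.zero_le _) (Finset.mem_univ i)
    unfold mdeg at h
    omega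
  · rintro rfl
    unfold mdeg
    simp

lemma mdeg_zero : mdeg (0 : Fin n → ℕ) = 0 := by unfold mdeg; simp

lemma mfact_zero : mfact (0 : Fin n → ℕ) = 1 := by unfold mfact; simp

lemma Lam_pow_apply (l p : MvPolynomial (Fin n) ℂ) : ∀ m : ℕ,
    (Lam ^ m) (ofXi l * ofZ p) = ∑ β ∈ degSet n m,
      ((m.factorial : ℂ) / (mfact β : ℂ)) • (Dxi β (ofXi l) * Dz β (ofZ p)) := by
  intro m
  induction m with
  | zero =>
    rw [degSet_zero, Finset.sum_singleton, pow_zero, Dxi_zero, Dz_zero, mfact_zero]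
    simp
  | succ m ih =>
    rw [pow_succ', Module.End.mul_apply, ih, map_sum]
    simp_rw [map_smul, Lam_T l p, Finset.smul_sum]
    -- Step A: termwise coefficient rewrite
    have stepA : ∀ β ∈ degSet n m, ∀ i : Fin n,
        ((m.factorial : ℂ) / (mfact β : ℂ)) • (Dxi (inc i β) (ofXi l) * Dz (inc i β) (ofZ p))
          = (((m.factorial : ℂ) * ((inc i β) i : ℂ)) / (mfact (inc i β) : ℂ)) •
              (Dxi (inc i β) (ofXi l) * Dz (inc i β) (ofZ p)) := by
      intro β _ i
      congr 1
      have h1 : ((inc i β) i : ℂ) = ((β i : ℂ) + 1) := by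
        unfold inc
        rw [Function.update_self]
        push_cast
        ring
      have h2 : (mfact (inc i β) : ℂ) = ((β i : ℂ) + 1) * (mfact β : ℂ) := by
        rw [mfact_inc]
        push_cast
        ring
      rw [h1, h2]
      have hb1 : ((β i : ℂ) + 1) ≠ 0 := by
        have h3 : ((β i + 1 : ℕ) : ℂ) ≠ 0 := Nat.cast_ne_zero.mpr (Nat.succ_ne_zero _)
        push_cast at h3
        exact h3
      rw [mul_comm (m.factorial : ℂ) ((β i : ℂ) + 1), mul_div_mul_left _ _ hb1]
    rw [Finset.sum_congr rfl (fun β hβ => Finset.sum_congr rfl fun i _ => stepA β hβ i)]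
    -- abbreviate
    set F : (Fin n → ℕ) → Fin n → P n := fun γ i =>
      (((m.factorial : ℂ) * ((γ i : ℕ) : ℂ)) / (mfact γ : ℂ)) •
        (Dxi γ (ofXi l) * Dz γ (ofZ p)) with hF
    -- Step B : reindex
    have stepB : ∑ β ∈ degSet n m, ∑ i, F (inc i β) i
        = ∑ γ ∈ degSet n (m + 1), ∑ i, F γ i := by
      rw [← Finset.sum_product' (s := degSet n m) (t := Finset.univ)
          (f := fun β i => F (inc i β) i),
        ← Finset.sum_product' (s := degSet n (m+1)) (t := Finset.univ)
          (f := fun γ i => F γ i)]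
      rw [← Finset.sum_filter_of_ne (s := (degSet n (m+1)) ×ˢ Finset.univ)
          (p := fun q => q.1 q.2 ≠ 0) (f := fun q => F q.1 q.2) ?vanish]
      case vanish =>
        intro q _ hFq
        intro hq0
        apply hFq
        rw [hF]
        simp only [hq0, Nat.cast_zero, mul_zero, zero_div, zero_smul]
      refine Finset.sum_nbij' (fun q => (inc q.2 q.1, q.2))
        (fun q => (Function.update q.1 q.2 (q.1 q.2 - 1), q.2)) ?_ ?_ ?_ ?_ ?_
      · rintro ⟨β, i⟩ hq
        rw [Finset.mem_product] at hq
        rw [Finset.mem_filter, Finset.mem_product]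
        refine ⟨⟨mem_degSet.mpr ?_, Finset.mem_univ _⟩, ?_⟩
        · rw [mdeg_inc, mem_degSet.mp hq.1]
        · show inc i β i ≠ 0
          unfold inc
          rw [Function.update_self]
          omega
      · rintro ⟨γ, i⟩ hq
        rw [Finset.mem_filter, Finset.mem_product] at hq
        obtain ⟨⟨hγ, -⟩, hne⟩ := hq
        rw [Finset.mem_product]
        refine ⟨mem_degSet.mpr ?_, Finset.mem_univ _⟩
        show mdeg (Function.update γ i (γ i - 1)) = m
        have h5 := mdeg_update γ i (γ i - 1)
        have hγm : mdeg γ = m + 1 := mem_degSet.mp hγ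
        have h6 : γ i ≠ 0 := hne
        omega
      · rintro ⟨β, i⟩ hq
        have key : Function.update (inc i β) i ((inc i β) i - 1) = β := by
          funext j
          rcases eq_or_ne j i with rfl | hj
          · rw [Function.update_self]
            show inc j β j - 1 = β j
            unfold inc
            rw [Function.update_self]
            omega
          · rw [Function.update_of_ne hj]
            show inc i β j = β j
            unfold inc
            rw [Function.update_of_ne hj]
        show (Function.update (inc i β) i ((inc i β) i - 1), i) = (β, i)
        rw [key]
      · rintro ⟨γ, i⟩ hq
        rw [Finset.mem_filter] at hq
        have hne : γ i ≠ 0 := hq.2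
        show (inc i (Function.update γ i (γ i - 1)), i) = (γ, i)
        rw [← eq_inc_update hne]
      · rintro ⟨β, i⟩ hq
        rfl
    rw [stepB]
    apply Finset.sum_congr rfl
    intro γ hγ
    rw [hF]
    simp only
    rw [← Finset.sum_smul]
    congr 1
    rw [← Finset.sum_div, ← Finset.mul_sum]
    have hsum : (∑ i, (γ i : ℂ)) = ((m + 1 : ℕ) : ℂ) := by
      rw [← Nat.cast_sum]
      congr 1
      exact mem_degSet.mp hγ
    rw [hsum, Nat.factorial_succ]
    push_cast
    ring

/-- Φ_t fixes λ(ξ) and p(z), and Φ_t(λ(ξ)p(z)) = λ(ξ) ∗_{-t} p(z). -/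
theorem Phi_fix_and_product (n : ℕ) (t : ℂ) (l p : MvPolynomial (Fin n) ℂ) :
    Phi t (ofXi l) = ofXi l ∧ Phi t (ofZ p) = ofZ p ∧
    Phi t (ofXi l * ofZ p) = astar (-t) (ofXi l) (ofZ p) := by
  refine ⟨?_, ?_, ?_⟩
  · unfold Phi
    rw [finsum_eq_single _ 0 ?_]
    · simp
    · intro m hm
      obtain ⟨k, rfl⟩ := Nat.exists_eq_succ_of_ne_zero hm
      have hz : (Lam ^ (k + 1)) (ofXi l) = 0 := by
        rw [pow_succ, Module.End.mul_apply, Lam_ofXi, map_zero]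
      rw [hz, smul_zero]
  · unfold Phi
    rw [finsum_eq_single _ 0 ?_]
    · simp
    · intro m hm
      obtain ⟨k, rfl⟩ := Nat.exists_eq_succ_of_ne_zero hm
      have hz : (Lam ^ (k + 1)) (ofZ p) = 0 := by
        rw [pow_succ, Module.End.mul_apply, Lam_ofZ, map_zero]
      rw [hz, smul_zero]
  · have hR : astar (-t) (ofXi l) (ofZ p)
        = ∑ᶠ β : Fin n → ℕ, ((t ^ mdeg β) / (mfact β : ℂ)) •
            (Dxi β (ofXi l) * Dz β (ofZ p)) := by
      unfold astar
      rw [finsum_eq_single _ (0 : Fin n → ℕ) ?_]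
      · have e1 : Dz (0 : Fin n → ℕ) (ofXi l) = ofXi l := by rw [Dz_zero]; rfl
        have e2 : Dxi (0 : Fin n → ℕ) (ofZ p) = ofZ p := by rw [Dxi_zero]; rfl
        apply finsum_congr
        intro β
        rw [e1, e2, mdeg_zero, mfact_zero, neg_neg, zero_add, Nat.cast_one, one_mul]
      · intro α hα
        have hz : Dz α (ofXi l) = 0 := Dz_ofXi_eq_zero hα l
        have hterm : ∀ β : Fin n → ℕ,
            ((-(-t)) ^ (mdeg α + mdeg β) / ((mfact α : ℂ) * (mfact β : ℂ))) •
              (Dxi β (Dz α (ofXi l)) * Dz β (Dxi α (ofZ p))) = 0 := by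
          intro β
          rw [hz, map_zero, zero_mul, smul_zero]
        exact (finsum_congr hterm).trans finsum_zero
    rw [hR]
    unfold Phi
    set N := l.totalDegree + p.totalDegree with hN
    have hTzero : ∀ β : Fin n → ℕ, N < mdeg β →
        Dxi β (ofXi l) * Dz β (ofZ p) = 0 := by
      intro β hβ
      rw [Dxi_ofXi_degkill (mdeg β) β l rfl (by omega), zero_mul]
    have hLzero : ∀ m : ℕ, N < m → (Lam ^ m) (ofXi l * ofZ p) = 0 := by
      intro m hm
      rw [Lam_pow_apply]
      apply Finset.sum_eq_zero
      intro β hβ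
      rw [hTzero β (by rw [mem_degSet.mp hβ]; exact hm), smul_zero]
    have hL : ∑ᶠ m : ℕ, (t ^ m / (m.factorial : ℂ)) • ((Lam ^ m) (ofXi l * ofZ p))
        = ∑ m ∈ Finset.range (N + 1),
            (t ^ m / (m.factorial : ℂ)) • ((Lam ^ m) (ofXi l * ofZ p)) := by
      apply finsum_eq_finset_sum_of_support_subset
      intro m hm
      simp only [Function.mem_support] at hm
      by_contra hc
      simp only [Finset.coe_range, Set.mem_Iio, not_lt] at hc
      exact hm (by rw [hLzero m (by omega), smul_zero])
    set B : Finset (Fin n → ℕ) := (Finset.range (N + 1)).biUnion (degSet n) with hB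
    have hRB : ∑ᶠ β : Fin n → ℕ, ((t ^ mdeg β) / (mfact β : ℂ)) •
          (Dxi β (ofXi l) * Dz β (ofZ p))
        = ∑ β ∈ B, ((t ^ mdeg β) / (mfact β : ℂ)) • (Dxi β (ofXi l) * Dz β (ofZ p)) := by
      apply finsum_eq_finset_sum_of_support_subset
      intro β hβ
      simp only [Function.mem_support] at hβ
      by_contra hc
      have hbig : N < mdeg β := by
        by_contra hle
        push_neg at hle
        exact hc (Finset.mem_biUnion.mpr
          ⟨mdeg β, Finset.mem_range.mpr (by omega), mem_degSet.mpr rfl⟩)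
      exact hβ (by rw [hTzero β hbig, smul_zero])
    have hdisj : ∀ x ∈ (Finset.range (N+1) : Finset ℕ), ∀ y ∈ Finset.range (N+1), x ≠ y →
        Disjoint (degSet n x) (degSet n y) := by
      intro x _ y _ hxy
      rw [Finset.disjoint_left]
      intro β h1 h2
      exact hxy ((mem_degSet.mp h1).symm.trans (mem_degSet.mp h2))
    rw [hL, hRB, hB, Finset.sum_biUnion hdisj]
    apply Finset.sum_congr rfl
    intro m hm
    rw [Lam_pow_apply, Finset.smul_sum]
    apply Finset.sum_congr rfl
    intro β hβ
    rw [smul_smul]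
    congr 1
    have hmf : (m.factorial : ℂ) ≠ 0 := Nat.cast_ne_zero.mpr m.factorial_ne_zero
    rw [mem_degSet.mp hβ, div_mul_div_comm, mul_comm (t ^ m) (m.factorial : ℂ),
      mul_div_mul_left _ _ hmf]
end
end

section
/- For m ∈ ℕ and one variable, the one-variable Laguerre polynomial satisfies L_m(ξz) = ((-1)^m/m!)·(ξ - ∂_z)^m(z^m) as polynomials in ℂ[ξ,z]; equivalently L_m(ξz) = ((-1)^m/m!)·(ξ^m ∗ z^m), where ∗ = ∗_{t=1}. -/
open MvPolynomial

noncomputable section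

variable {n : ℕ}

def ZPowZ (α : Fin n → ℕ) : P n := ∏ i, zv i ^ α i
/-- The Laguerre polynomial L_m(z) = Σ_{j=0}^m C(m, m-j)(-z)^j/j!. -/
def laguerre (m : ℕ) : Polynomial ℂ :=
  ∑ j ∈ Finset.range (m + 1),
    Polynomial.C ((m.choose (m - j) : ℂ) * (-1) ^ j / (j.factorial : ℂ)) * Polynomial.X ^ j

lemma dz_zv_pow (m : ℕ) : dz (0 : Fin 1) ((zv 0 : P 1) ^ m) = (m : ℂ) • zv 0 ^ (m - 1) := by
  show pderiv (Sum.inr 0) ((X (Sum.inr 0) : P 1) ^ m) = _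
  rw [Derivation.leibniz_pow, pderiv_X_self, zv, smul_eq_mul, mul_one, Nat.cast_smul_eq_nsmul]

lemma dxi_xiv_pow (m : ℕ) : dxi (0 : Fin 1) ((xiv 0 : P 1) ^ m) = (m : ℂ) • xiv 0 ^ (m - 1) := by
  show pderiv (Sum.inl 0) ((X (Sum.inl 0) : P 1) ^ m) = _
  rw [Derivation.leibniz_pow, pderiv_X_self, xiv, smul_eq_mul, mul_one, Nat.cast_smul_eq_nsmul]

lemma dz_xiv_pow (m : ℕ) : dz (0 : Fin 1) ((xiv 0 : P 1) ^ m) = 0 := by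
  show pderiv (Sum.inr 0) ((X (Sum.inl 0) : P 1) ^ m) = _
  rw [Derivation.leibniz_pow, pderiv_X_of_ne (by simp), smul_zero, smul_zero]

lemma dxi_zv_pow (m : ℕ) : dxi (0 : Fin 1) ((zv 0 : P 1) ^ m) = 0 := by
  show pderiv (Sum.inl 0) ((X (Sum.inr 0) : P 1) ^ m) = _
  rw [Derivation.leibniz_pow, pderiv_X_of_ne (by simp), smul_zero, smul_zero]

lemma cast_mul_pred_descFactorial (m k : ℕ) :
    ((m : ℂ)) * ((m - 1).descFactorial k : ℂ) = (m.descFactorial (k+1) : ℂ) := by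
  cases m with
  | zero => simp [Nat.zero_descFactorial_succ]
  | succ n => rw [Nat.succ_descFactorial_succ]; push_cast; ring

lemma dz_pow_zv (k : ℕ) : ∀ m : ℕ, (dz (0:Fin 1) ^ k) ((zv 0 : P 1) ^ m)
    = (m.descFactorial k : ℂ) • zv 0 ^ (m - k) := by
  induction k with
  | zero => intro m; simp
  | succ k ih =>
    intro m
    rw [pow_succ, Module.End.mul_apply, dz_zv_pow, map_smul, ih, smul_smul,
      cast_mul_pred_descFactorial]
    congr 2
    omega

lemma dxi_pow_xiv (k : ℕ) : ∀ m : ℕ, (dxi (0:Fin 1) ^ k) ((xiv 0 : P 1) ^ m)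
    = (m.descFactorial k : ℂ) • xiv 0 ^ (m - k) := by
  induction k with
  | zero => intro m; simp
  | succ k ih =>
    intro m
    rw [pow_succ, Module.End.mul_apply, dxi_xiv_pow, map_smul, ih, smul_smul,
      cast_mul_pred_descFactorial]
    congr 2
    omega

lemma dz_pow_xiv (k m : ℕ) (hk : k ≠ 0) : (dz (0:Fin 1) ^ k) ((xiv 0 : P 1) ^ m) = 0 := by
  obtain ⟨k, rfl⟩ := Nat.exists_eq_succ_of_ne_zero hk
  rw [pow_succ, Module.End.mul_apply, dz_xiv_pow, map_zero]

lemma dxi_pow_zv (k m : ℕ) (hk : k ≠ 0) : (dxi (0:Fin 1) ^ k) ((zv 0 : P 1) ^ m) = 0 := by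
  obtain ⟨k, rfl⟩ := Nat.exists_eq_succ_of_ne_zero hk
  rw [pow_succ, Module.End.mul_apply, dxi_zv_pow, map_zero]

lemma commute_mulXi_dz : Commute (mulXi (0:Fin 1)) (dz (0:Fin 1)) := by
  apply LinearMap.ext
  intro f
  show xiv 0 * pderiv (Sum.inr 0) f = pderiv (Sum.inr 0) (xiv 0 * f)
  rw [pderiv_mul]
  rw [show pderiv (Sum.inr 0) (xiv 0 : P 1) = 0 from pderiv_X_of_ne (by simp)]
  ring

lemma mulXi_pow_apply (k : ℕ) (f : P 1) : (mulXi (0:Fin 1) ^ k) f = xiv 0 ^ k * f := by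
  rw [mulXi, LinearMap.pow_mulLeft, LinearMap.mulLeft_apply]
lemma part1 (m : ℕ) :
    Polynomial.aeval (xiv 0 * zv 0 : P 1) (laguerre m) =
      ((-1 : ℂ) ^ m / (m.factorial : ℂ)) •
        (((mulXi 0 - dz 0 : Module.End ℂ (P 1)) ^ m) ((zv 0 : P 1) ^ m)) := by
  have hsub : (mulXi (0:Fin 1) - dz 0) ^ m
      = ∑ k ∈ Finset.range (m+1),
          mulXi (0:Fin 1) ^ k * (-dz (0:Fin 1)) ^ (m-k) * (m.choose k : Module.End ℂ (P 1)) := by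
    rw [sub_eq_add_neg]
    exact (commute_mulXi_dz.neg_right).add_pow m
  rw [hsub, LinearMap.sum_apply, Finset.smul_sum, laguerre, map_sum]
  apply Finset.sum_congr rfl
  intro k hk
  have hkm : k ≤ m := Nat.lt_succ_iff.mp (Finset.mem_range.mp hk)
  have hneg : (-dz (0:Fin 1)) ^ (m-k) = ((-1:ℂ)^(m-k)) • dz 0 ^ (m-k) := by
    rw [← neg_one_smul ℂ (dz (0:Fin 1)), smul_pow]
  rw [Module.End.mul_apply, Module.End.mul_apply, Module.End.natCast_apply,
    ← Nat.cast_smul_eq_nsmul ℂ, map_smul, hneg, LinearMap.smul_apply,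
    dz_pow_zv, map_smul, map_smul, map_smul, mulXi_pow_apply,
    show m - (m - k) = k by omega]
  rw [map_mul, Polynomial.aeval_C, map_pow, Polynomial.aeval_X, ← Algebra.smul_def,
    smul_smul, smul_smul, smul_smul, ← mul_pow]
  congr 1
  have h1n : k.factorial * m.descFactorial (m - k) = m.factorial := by
    have := Nat.factorial_mul_descFactorial (Nat.sub_le m k)
    rwa [show m - (m - k) = k by omega] at this
  have h1 : (k.factorial : ℂ) * (m.descFactorial (m-k) : ℂ) = (m.factorial : ℂ) := by
    exact_mod_cast congrArg (Nat.cast : ℕ → ℂ) h1n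
  have h2 : (m.choose (m-k) : ℂ) = (m.choose k : ℂ) := by
    rw [Nat.choose_symm hkm]
  have h3 : ((-1:ℂ)^m * (-1:ℂ)^(m-k)) = (-1:ℂ)^k := by
    rw [← pow_add, show m + (m-k) = k + 2*(m-k) by omega, pow_add, pow_mul]
    simp
  have hm0 : (m.factorial : ℂ) ≠ 0 := Nat.cast_ne_zero.mpr m.factorial_ne_zero
  have hk0 : (k.factorial : ℂ) ≠ 0 := Nat.cast_ne_zero.mpr k.factorial_ne_zero
  rw [h2]
  field_simp
  linear_combination (-(m.choose k:ℂ)*(-1:ℂ)^k) * h1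
    + (-(m.choose k:ℂ)*(m.descFactorial (m-k):ℂ)*(k.factorial:ℂ)) * h3
lemma Dz_one (α : Fin 1 → ℕ) : (Dz α : Module.End ℂ (P 1)) = dz 0 ^ α 0 := by
  simp [Dz, List.ofFn_succ]

lemma Dxi_one (α : Fin 1 → ℕ) : (Dxi α : Module.End ℂ (P 1)) = dxi 0 ^ α 0 := by
  simp [Dxi, List.ofFn_succ]

lemma mdeg_one (α : Fin 1 → ℕ) : mdeg α = α 0 := by
  simp [mdeg]

lemma mfact_one (α : Fin 1 → ℕ) : mfact α = (α 0).factorial := by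
  simp [mfact]

lemma astar_eval (m : ℕ) : astar 1 ((xiv (0:Fin 1)) ^ m) ((zv 0) ^ m)
    = ∑ b ∈ Finset.range (m+1), ((-1:ℂ)^b / (b.factorial : ℂ)) •
        (((m.descFactorial b : ℂ) • xiv 0 ^ (m-b)) * ((m.descFactorial b : ℂ) • zv 0 ^ (m-b))) := by
  set g : ℕ → P 1 := fun b => ((-1:ℂ)^b / (b.factorial : ℂ)) •
        (((m.descFactorial b : ℂ) • xiv 0 ^ (m-b)) * ((m.descFactorial b : ℂ) • zv 0 ^ (m-b)))
    with hg
  have hout : ∀ α : Fin 1 → ℕ, α ≠ 0 → (∑ᶠ (β : Fin 1 → ℕ),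
      ((-(1:ℂ)) ^ (mdeg α + mdeg β) / ((mfact α : ℂ) * (mfact β : ℂ))) •
        (Dxi β (Dz α ((xiv 0 : P 1) ^ m)) * Dz β (Dxi α ((zv 0 : P 1) ^ m)))) = 0 := by
    intro α hα
    have h0 : α 0 ≠ 0 := by
      intro h
      exact hα (funext fun i => by fin_cases i; exact h)
    have hz : Dz α ((xiv 0 : P 1) ^ m) = 0 := by
      rw [Dz_one, dz_pow_xiv _ _ h0]
    simp [hz]
  have hsummand : ∀ β : Fin 1 → ℕ,
      ((-(1:ℂ)) ^ (mdeg (0 : Fin 1 → ℕ) + mdeg β) /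
          ((mfact (0 : Fin 1 → ℕ) : ℂ) * (mfact β : ℂ))) •
        (Dxi β (Dz (0 : Fin 1 → ℕ) ((xiv 0 : P 1) ^ m)) *
          Dz β (Dxi (0 : Fin 1 → ℕ) ((zv 0 : P 1) ^ m)))
      = g (β 0) := by
    intro β
    rw [Dz_one, Dz_one, Dxi_one, Dxi_one, mdeg_one, mdeg_one, mfact_one, mfact_one]
    simp only [Pi.zero_apply, pow_zero, Module.End.one_apply, Nat.factorial_zero, Nat.cast_one,
      one_mul, zero_add]
    rw [dxi_pow_xiv, dz_pow_zv, hg]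
  have hsupp : Function.support g ⊆ (↑(Finset.range (m+1)) : Set ℕ) := by
    apply Function.support_subset_iff'.2
    intro b hb
    have hmb : m < b := by simpa using hb
    rw [hg]
    simp [Nat.descFactorial_eq_zero_iff_lt.mpr hmb]
  rw [astar, finsum_eq_single _ 0 hout, finsum_congr hsummand,
    show (fun β : Fin 1 → ℕ => g (β 0))
      = (fun β : Fin 1 → ℕ => g ((Equiv.funUnique (Fin 1) ℕ) β)) from rfl,
    finsum_comp_equiv, finsum_eq_finset_sum_of_support_subset g hsupp]
/-- L_m(ξz) = ((-1)^m/m!)(ξ - ∂)^m(z^m) = ((-1)^m/m!)(ξ^m ∗ z^m), where ∗ = ∗_{t=1}. -/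
theorem laguerre_eq_astar (m : ℕ) :
    Polynomial.aeval (xiv 0 * zv 0 : P 1) (laguerre m) =
      ((-1 : ℂ) ^ m / (m.factorial : ℂ)) • (((mulXi 0 - dz 0 : Module.End ℂ (P 1)) ^ m) ((zv 0 : P 1) ^ m)) ∧
    Polynomial.aeval (xiv 0 * zv 0 : P 1) (laguerre m) =
      ((-1 : ℂ) ^ m / (m.factorial : ℂ)) • astar 1 ((xiv 0) ^ m) ((zv 0) ^ m) := by
  refine ⟨part1 m, ?_⟩
  rw [astar_eval, Finset.smul_sum, laguerre, map_sum,
    ← Finset.sum_range_reflect (fun j => (Polynomial.aeval (xiv 0 * zv 0 : P 1))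
        (Polynomial.C ((m.choose (m - j) : ℂ) * (-1) ^ j / (j.factorial : ℂ))
          * Polynomial.X ^ j)) (m+1)]
  apply Finset.sum_congr rfl
  intro b hb
  have hbm : b ≤ m := Nat.lt_succ_iff.mp (Finset.mem_range.mp hb)
  rw [show m + 1 - 1 - b = m - b by omega]
  rw [map_mul, Polynomial.aeval_C, map_pow, Polynomial.aeval_X, ← Algebra.smul_def,
    show m - (m - b) = b by omega, mul_pow, smul_mul_smul_comm, smul_smul, smul_smul]
  congr 1
  have h1n : (m - b).factorial * m.descFactorial b = m.factorial :=
    Nat.factorial_mul_descFactorial hbm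
  have h1 : ((m-b).factorial : ℂ) * (m.descFactorial b : ℂ) = (m.factorial : ℂ) := by
    exact_mod_cast congrArg (Nat.cast : ℕ → ℂ) h1n
  have h2 : (m.descFactorial b : ℂ) = (b.factorial : ℂ) * (m.choose b : ℂ) := by
    exact_mod_cast congrArg (Nat.cast : ℕ → ℂ) (Nat.descFactorial_eq_factorial_mul_choose m b)
  have h3 : ((-1:ℂ)^m * (-1:ℂ)^b) = (-1:ℂ)^(m-b) := by
    rw [← pow_add, show m + b = (m - b) + 2*b by omega, pow_add, pow_mul]
    simp
  have h4 : (m.choose (m - (m - b)) : ℂ) = (m.choose b : ℂ) := by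
    rw [show m - (m - b) = b by omega]
  have hm0 : (m.factorial : ℂ) ≠ 0 := Nat.cast_ne_zero.mpr m.factorial_ne_zero
  have hb0 : (b.factorial : ℂ) ≠ 0 := Nat.cast_ne_zero.mpr b.factorial_ne_zero
  have hmb0 : ((m-b).factorial : ℂ) ≠ 0 := Nat.cast_ne_zero.mpr (m-b).factorial_ne_zero
  field_simp
  linear_combination (-(m.descFactorial b:ℂ)*(m.descFactorial b:ℂ)*((m-b).factorial:ℂ)) * h3
    + (-(-1:ℂ)^(m-b)*(m.descFactorial b:ℂ)) * h1
    + (-(-1:ℂ)^(m-b)*(m.factorial:ℂ)) * h2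
end
end

section
/- Let K be a field and f(z) ∈ K[z] with deg f ≥ 2. Then f(z) is irreducible over K if and only if f(ξz) ∈ K[ξ,z], viewed as a polynomial in the two variables ξ and z, is irreducible over K. -/
open MvPolynomial

section Aux
variable {K : Type*} [Field K]

/-- constant polynomial irreducible iff element irreducible, over a domain -/
lemma irreducible_C_iff {R : Type*} [CommRing R] [IsDomain R] (p : R) :
    Irreducible (Polynomial.C p : Polynomial R) ↔ Irreducible p := by
  constructor
  · intro h
    refine ⟨fun hu => h.not_isUnit (Polynomial.isUnit_C.mpr hu), fun a b hab => ?_⟩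
    have := h.isUnit_or_isUnit (by rw [hab, map_mul])
    simpa [Polynomial.isUnit_C] using this
  · intro h
    refine ⟨fun hu => h.not_isUnit (Polynomial.isUnit_C.mp hu), fun a b hab => ?_⟩
    have hp0 : p ≠ 0 := h.ne_zero
    have ha : a ≠ 0 := fun h0 => by simp [h0, Polynomial.C_eq_zero.not.mpr hp0] at hab
    have hb : b ≠ 0 := fun h0 => by simp [h0, Polynomial.C_eq_zero.not.mpr hp0] at hab
    have hd : a.natDegree = 0 ∧ b.natDegree = 0 := by
      have := Polynomial.natDegree_mul ha hb
      rw [← hab, Polynomial.natDegree_C] at this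
      omega
    obtain ⟨a0, rfl⟩ := Polynomial.natDegree_eq_zero.mp hd.1
    obtain ⟨b0, rfl⟩ := Polynomial.natDegree_eq_zero.mp hd.2
    rw [← map_mul] at hab
    have := h.isUnit_or_isUnit (Polynomial.C_injective hab)
    simpa [Polynomial.isUnit_C] using this

lemma coeff_aeval_X_mul_C {S : Type*} [CommRing S] [Algebra K S]
    (p : Polynomial K) (r : S) (k : ℕ) :
    (Polynomial.aeval (Polynomial.C r * Polynomial.X) p).coeff k
      = algebraMap K S (p.coeff k) * r ^ k := by
  induction p using Polynomial.induction_on' with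
  | add p q hp hq => simp [hp, hq, add_mul]
  | monomial n a =>
      rw [Polynomial.aeval_monomial, mul_pow, ← Polynomial.C_pow,
        Polynomial.algebraMap_apply, ← mul_assoc, mul_comm _ (Polynomial.C (r ^ n)),
        ← map_mul, Polynomial.coeff_C_mul, Polynomial.coeff_monomial]
      by_cases h : n = k
      · subst h; simp [Polynomial.coeff_X_pow, mul_comm]
      · simp [Polynomial.coeff_X_pow, h, Ne.symm h]
end Aux

section Aux2
variable {K : Type*} [Field K]

noncomputable def scaleEquiv (F : Type*) [Field F] (u : F) (hu : u ≠ 0) :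
    Polynomial F ≃ₐ[F] Polynomial F :=
  AlgEquiv.ofAlgHom (Polynomial.aeval (Polynomial.C u * Polynomial.X))
    (Polynomial.aeval (Polynomial.C u⁻¹ * Polynomial.X))
    (by
      apply Polynomial.algHom_ext
      simp [← mul_assoc, ← Polynomial.C_mul, hu])
    (by
      apply Polynomial.algHom_ext
      simp [← mul_assoc, ← Polynomial.C_mul, hu])

@[simp] lemma scaleEquiv_apply (F : Type*) [Field F] (u : F) (hu : u ≠ 0) (p : Polynomial F) :
    scaleEquiv F u hu p = Polynomial.aeval (Polynomial.C u * Polynomial.X) p := rfl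

lemma not_irr_of_coeff_zero {R : Type*} [CommRing R] [IsDomain R] (p : Polynomial R)
    (h0 : p.coeff 0 = 0) (h2 : 2 ≤ p.natDegree) : ¬ Irreducible p := by
  obtain ⟨q, hq⟩ := Polynomial.X_dvd_iff.mpr h0
  intro h
  rcases h.isUnit_or_isUnit hq with hX | hq'
  · exact Polynomial.not_isUnit_X hX
  · obtain ⟨r, hr, rfl⟩ := Polynomial.isUnit_iff.mp hq'
    rw [hq, Polynomial.natDegree_mul Polynomial.X_ne_zero
      (Polynomial.C_ne_zero.mpr hr.ne_zero)] at h2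
    simp at h2

end Aux2

theorem irr_aux {K : Type*} [Field K] (f : Polynomial K) (hf : 2 ≤ f.natDegree)
    (e : Polynomial (Polynomial K) ≃ₐ[K] Polynomial (Polynomial K))
    (heX : e Polynomial.X = Polynomial.C Polynomial.X) :
    Irreducible f ↔
      Irreducible (Polynomial.aeval
        (Polynomial.C Polynomial.X * Polynomial.X : Polynomial (Polynomial K)) f) := by
  set g : Polynomial (Polynomial K) :=
    Polynomial.aeval (Polynomial.C Polynomial.X * Polynomial.X) f with hg
  have hgc : ∀ k, g.coeff k = Polynomial.C (f.coeff k) * Polynomial.X ^ k := by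
    intro k
    rw [hg, coeff_aeval_X_mul_C, Polynomial.algebraMap_eq]
  by_cases h0 : f.coeff 0 = 0
  · have hfn : ¬ Irreducible f := not_irr_of_coeff_zero f h0 hf
    have hgdeg : g.natDegree = f.natDegree := by
      apply le_antisymm
      · apply Polynomial.natDegree_le_iff_coeff_eq_zero.mpr
        intro m hm
        rw [hgc, Polynomial.coeff_eq_zero_of_natDegree_lt hm]
        simp
      · apply Polynomial.le_natDegree_of_ne_zero
        rw [hgc]
        have hfne : f ≠ 0 := fun h => by simp [h] at hf
        exact mul_ne_zero (Polynomial.C_ne_zero.mpr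
          (Polynomial.leadingCoeff_ne_zero.mpr hfne)) (pow_ne_zero _ Polynomial.X_ne_zero)
    have hgn : ¬ Irreducible g := by
      apply not_irr_of_coeff_zero
      · rw [hgc, h0]; simp
      · omega
    exact iff_of_false hfn hgn
  · letI := Classical.decEq K
    set F := RatFunc K
    set φ : Polynomial K →+* F := algebraMap (Polynomial K) F with hφ
    have hφinj : Function.Injective φ := IsFractionRing.injective _ _
    set f₁ : Polynomial (Polynomial K) :=
      Polynomial.aeval (Polynomial.X : Polynomial (Polynomial K)) f with hf₁
    have hf1c : ∀ k, f₁.coeff k = Polynomial.C (f.coeff k) := by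
      intro k
      have := coeff_aeval_X_mul_C (S := Polynomial K) f 1 k
      simpa [Polynomial.algebraMap_eq] using this
    -- primitivity
    have hprimg : g.IsPrimitive := by
      intro r hr
      have := (Polynomial.C_dvd_iff_dvd_coeff r g).mp hr 0
      rw [hgc] at this
      simp only [pow_zero, mul_one] at this
      exact isUnit_of_dvd_unit this (Polynomial.isUnit_C.mpr (isUnit_iff_ne_zero.mpr h0))
    have hprimf₁ : f₁.IsPrimitive := by
      intro r hr
      have := (Polynomial.C_dvd_iff_dvd_coeff r f₁).mp hr 0
      rw [hf1c] at this
      exact isUnit_of_dvd_unit this (Polynomial.isUnit_C.mpr (isUnit_iff_ne_zero.mpr h0))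
    have gauss1 : Irreducible g ↔ Irreducible (g.map φ) :=
      hprimg.irreducible_iff_irreducible_map_fraction_map
    have gauss2 : Irreducible f₁ ↔ Irreducible (f₁.map φ) :=
      hprimf₁.irreducible_iff_irreducible_map_fraction_map
    -- step 1 : Irreducible f ↔ Irreducible f₁ via the swap equiv
    have hef1 : e f₁ = Polynomial.C f := by
      have h1 : e f₁ = Polynomial.aeval (e Polynomial.X) f :=
        (Polynomial.aeval_algHom_apply e Polynomial.X f).symm
      rw [h1, heX, show (Polynomial.C Polynomial.X : Polynomial (Polynomial K))
          = Polynomial.CAlgHom (R := K) (A := Polynomial K) Polynomial.X from rfl,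
        Polynomial.aeval_algHom_apply, Polynomial.aeval_X_left_apply]
      rfl
    have step1 : Irreducible f ↔ Irreducible f₁ := by
      rw [← irreducible_C_iff (R := Polynomial K) f, ← hef1, MulEquiv.irreducible_iff e]
    -- step 2 : over F, relate g.map φ and f₁.map φ by scaling
    set u : F := φ Polynomial.X with hu'
    have hu : u ≠ 0 := fun h => Polynomial.X_ne_zero (hφinj (by simpa using h))
    have hscale : g.map φ = scaleEquiv F u hu (f₁.map φ) := by
      apply Polynomial.ext
      intro k
      rw [scaleEquiv_apply, Polynomial.coeff_map, hgc,
        coeff_aeval_X_mul_C (K := F) (f₁.map φ) u k, Polynomial.coeff_map, hf1c]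
      simp [Algebra.algebraMap_self]
      exact Or.inl rfl
    have step2 : Irreducible (g.map φ) ↔ Irreducible (f₁.map φ) := by
      rw [hscale, MulEquiv.irreducible_iff (scaleEquiv F u hu)]
    rw [step1, gauss2, ← step2, ← gauss1]

noncomputable def e2 (K : Type*) [Field K] :
    MvPolynomial (Fin 2) K ≃ₐ[K] Polynomial (Polynomial K) :=
  (finSuccEquiv K 1).trans (Polynomial.mapAlgEquiv
    ((finSuccEquiv K 0).trans (Polynomial.mapAlgEquiv (isEmptyAlgEquiv K (Fin 0)))))

lemma e2_X0 (K : Type*) [Field K] : e2 K (X 0) = Polynomial.X := by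
  simp [e2, finSuccEquiv_X_zero, Polynomial.mapAlgEquiv]

lemma e2_X1 (K : Type*) [Field K] : e2 K (X 1) = Polynomial.C Polynomial.X := by
  have : (X 1 : MvPolynomial (Fin 2) K) = X (Fin.succ 0) := by norm_num
  simp [e2, this, finSuccEquiv_X_succ, Polynomial.mapAlgEquiv, finSuccEquiv_X_zero]

/-- For f ∈ K[z] with deg f ≥ 2, f(z) is irreducible over K iff f(ξz) ∈ K[ξ,z],
viewed as a polynomial in the two variables ξ and z, is irreducible over K. -/
theorem irreducible_iff_irreducible_comp_mul (K : Type*) [Field K] (f : Polynomial K)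
    (hf : 2 ≤ f.natDegree) :
    Irreducible f ↔
      Irreducible (Polynomial.aeval (X 0 * X 1 : MvPolynomial (Fin 2) K) f) := by
  -- the swap automorphism of K[y][X]
  set e : Polynomial (Polynomial K) ≃ₐ[K] Polynomial (Polynomial K) :=
    ((e2 K).symm.trans (renameEquiv K (Equiv.swap (0 : Fin 2) 1))).trans (e2 K) with he
  have heX : e Polynomial.X = Polynomial.C Polynomial.X := by
    have h1 : (e2 K).symm Polynomial.X = X 0 := by
      rw [AlgEquiv.symm_apply_eq, e2_X0]
    simp only [he, AlgEquiv.trans_apply, h1, renameEquiv_apply, rename_X,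
      Equiv.swap_apply_left, e2_X1]
  have key : e2 K (Polynomial.aeval (X 0 * X 1 : MvPolynomial (Fin 2) K) f)
      = Polynomial.aeval (Polynomial.C Polynomial.X * Polynomial.X :
          Polynomial (Polynomial K)) f := by
    rw [← Polynomial.aeval_algHom_apply (e2 K) _ f, map_mul, e2_X0, e2_X1, mul_comm]
  rw [irr_aux f hf e heX, ← key, MulEquiv.irreducible_iff (e2 K)]
end
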